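/- arXiv:0809.0473 — 6 statements merged into one kernel-verified Lean document; each statement's English description precedes it below -/
import Mathlib

section
/- Let k ≥ 2 and let c₁, …, c_k ∈ K be pairwise distinct elements all of the same value v(c₁) = ⋯ = v(c_k) = α and with c₁ + ⋯ + c_k = 0. Then there exist indices i ≠ j such that v(c_i − c_j) = α (in particular, c_i and c_j do not lie in the same rv-ball, i.e. rv is not constant on {c₁, …, c_k}). -/
/-- If `c₁, …, c_k` (`k ≥ 2`) are pairwise distinct elements of the same value `α`
whose sum is `0`, then some difference `c i - c j` (`i ≠ j`) also has value `α`;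
in particular `rv` is not constant on `{c₁, …, c_k}`.  (Equicharacteristic zero.) -/
theorem average_zero_rv_not_constant
    {K : Type*} [Field K] {Γ₀ : Type*} [LinearOrderedCommGroupWithZero Γ₀]
    (v : Valuation K Γ₀)
    (hchar : ∀ n : ℕ, 0 < n → v (n : K) = 1)
    {k : ℕ} (hk : 2 ≤ k) (c : Fin k → K) (hinj : Function.Injective c)
    (α : Γ₀) (hval : ∀ i, v (c i) = α)
    (hsum : ∑ i, c i = 0) :
    ∃ i j : Fin k, i ≠ j ∧ v (c i - c j) = α := by
  by_contra h
  push_neg at h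
  have i0 : Fin k := ⟨0, by omega⟩
  have i1 : Fin k := ⟨1, by omega⟩
  have hα : α ≠ 0 := by
    intro h0
    have h1 : c ⟨0, by omega⟩ = c ⟨1, by omega⟩ := by
      have a := hval ⟨0, by omega⟩
      have b := hval ⟨1, by omega⟩
      rw [h0, Valuation.zero_iff] at a b
      rw [a, b]
    exact absurd (hinj h1) (by simp [Fin.ext_iff])
  have hlt : ∀ i j : Fin k, i ≠ j → v (c i - c j) < α := by
    intro i j hij
    refine lt_of_le_of_ne ?_ (h i j hij)
    calc v (c i - c j) ≤ max (v (c i)) (v (c j)) := v.map_sub _ _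
      _ = α := by rw [hval, hval, max_self]
  set z : Fin k := ⟨0, by omega⟩ with hz
  have hsum' : ∑ i, c i = (∑ i, (c i - c z)) + (k : K) * c z := by
    rw [Finset.sum_sub_distrib, Finset.sum_const, Finset.card_univ,
      Fintype.card_fin, nsmul_eq_mul]
    ring
  have hvk : v ((k : K) * c z) = α := by
    rw [v.map_mul, hchar k (by omega), hval, one_mul]
  have hvs : v (∑ i, (c i - c z)) < α := by
    apply v.map_sum_lt hα
    intro i _
    rcases eq_or_ne i z with rfl | hi
    · simpa using zero_lt_iff.mpr hα
    · exact hlt i z hi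
  have : v (∑ i, c i) = α := by
    rw [hsum']
    rw [v.map_add_eq_of_lt_right (by rw [hvk]; exact hvs)]
    exact hvk
  rw [hsum, v.map_zero] at this
  exact hα this.symm
end

section
/- Let F = Σ_{i=0}^{n} b_i X^i ∈ K[X] be a polynomial, let t ∈ K with v(t) ≠ 0, and set M = max_{0 ≤ i ≤ n} v(b_i · t^i). Assume that v(F(c)) < M for every c ∈ K with v(c − t) < v(t) (this expresses, in valuation-theoretic terms, that the reduction F̄ of F over the leading-term structure RV vanishes at rv(t), with the monomials omitted from F̄ having strictly smaller value on the rv-ball of t). Then F has a root b ∈ K with v(b − t) < v(t), i.e. a root b with rv(b) = rv(t). -/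
open Polynomial

private lemma coeff_prod_bound
    {K : Type*} [Field K]
    {Γ₀ : Type*} [LinearOrderedCommGroupWithZero Γ₀]
    (v : Valuation K Γ₀) (t : K) (s : Multiset K) :
    ∀ i : ℕ, v (((s.map fun r => X - C r).prod).coeff i) * v t ^ i ≤
      (s.map fun r => max (v r) (v t)).prod := by
  induction s using Multiset.induction with
  | empty =>
    intro i
    cases i with
    | zero => simp
    | succ n => simp [coeff_one, zero_le']
  | cons r s ih =>
    intro i
    rw [Multiset.map_cons, Multiset.prod_cons, Multiset.map_cons, Multiset.prod_cons]
    set P := (s.map fun r => X - C r).prod with hP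
    have hexp : (X - C r) * P = X * P - C r * P := by ring
    cases i with
    | zero =>
      rw [hexp]
      have h0 : ((X * P - C r * P).coeff 0) = -(r * P.coeff 0) := by
        simp [coeff_sub, mul_coeff_zero]
      rw [h0]
      simp only [pow_zero, mul_one]
      rw [Valuation.map_neg, Valuation.map_mul]
      calc v r * v (P.coeff 0)
          ≤ max (v r) (v t) * (s.map fun r => max (v r) (v t)).prod := by
            have := ih 0
            simp only [pow_zero, mul_one] at this
            exact mul_le_mul' (le_max_left _ _) this
    | succ n =>
      rw [hexp]
      have h1 : ((X * P - C r * P).coeff (n + 1)) = P.coeff n - r * P.coeff (n + 1) := by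
        simp [coeff_sub, coeff_X_mul]
      rw [h1]
      have hle := Valuation.map_sub v (P.coeff n) (r * P.coeff (n + 1))
      calc v (P.coeff n - r * P.coeff (n + 1)) * v t ^ (n + 1)
          ≤ max (v (P.coeff n)) (v (r * P.coeff (n + 1))) * v t ^ (n + 1) :=
            mul_le_mul_left hle _
        _ ≤ max (v r) (v t) * (s.map fun r => max (v r) (v t)).prod := by
            rcases max_le_iff.mp (le_refl (max (v (P.coeff n)) (v (r * P.coeff (n + 1))))) with ⟨-, -⟩
            rcases le_total (v (P.coeff n)) (v (r * P.coeff (n + 1))) with h | h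
            · rw [max_eq_right h, Valuation.map_mul]
              calc v r * v (P.coeff (n + 1)) * v t ^ (n + 1)
                  = v r * (v (P.coeff (n + 1)) * v t ^ (n + 1)) := mul_assoc _ _ _
                _ ≤ max (v r) (v t) * (s.map fun r => max (v r) (v t)).prod :=
                    mul_le_mul' (le_max_left _ _) (ih (n + 1))
            · rw [max_eq_left h]
              calc v (P.coeff n) * v t ^ (n + 1)
                  = v t * (v (P.coeff n) * v t ^ n) := by
                    rw [pow_succ, mul_comm (v t) (v (P.coeff n) * v t ^ n), mul_assoc]
                _ ≤ max (v r) (v t) * (s.map fun r => max (v r) (v t)).prod :=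
                    mul_le_mul' (le_max_right _ _) (ih n)

/-- If the "reduction" of a polynomial `F` vanishes on the rv-ball of `t`
(i.e. `v (F c) < M` for all `c` in the rv-ball of `t`, where
`M = max_i v (F.coeff i * t ^ i)`), then `F` has a root in the rv-ball of `t`. -/
theorem rv_root_lift_vf
    {K : Type*} [Field K] [IsAlgClosed K]
    {Γ₀ : Type*} [LinearOrderedCommGroupWithZero Γ₀]
    (v : Valuation K Γ₀)
    (F : Polynomial K) (t : K) (ht : v t ≠ 0)
    (M : Γ₀)
    (hM : M = (Finset.range (F.natDegree + 1)).sup'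
      (Finset.nonempty_range_iff.mpr (Nat.succ_ne_zero _))
      fun i => v (F.coeff i * t ^ i))
    (hred : ∀ c : K, v (c - t) < v t → v (F.eval c) < M) :
    ∃ b : K, v (b - t) < v t ∧ F.eval b = 0 := by
  have htball : v (t - t) < v t := by
    simpa using zero_lt_iff.mpr ht
  by_cases hF : F = 0
  · exact ⟨t, htball, by simp [hF]⟩
  by_contra hcon
  push_neg at hcon
  -- every root is outside the ball
  have hroots : ∀ r ∈ F.roots, v t ≤ v (t - r) := by
    intro r hr
    have hr0 : F.eval r = 0 := (mem_roots hF).mp hr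
    have := hcon r
    rw [Valuation.map_sub_swap]
    by_contra hlt
    push_neg at hlt
    exact (this hlt) hr0
  have hmax : ∀ r ∈ F.roots, max (v r) (v t) ≤ v (t - r) := by
    intro r hr
    refine max_le ?_ (hroots r hr)
    have : v r = v (t - (t - r)) := by ring_nf
    rw [this]
    exact le_trans (Valuation.map_sub v t (t - r)) (max_le (hroots r hr) le_rfl)
  have hsplit : F.Splits := IsAlgClosed.splits F
  have heq := hsplit.eq_prod_roots
  set P := (F.roots.map fun a => X - C a).prod with hPdef
  -- value of F at t
  have hFt : v (F.eval t) = v F.leadingCoeff * (F.roots.map fun r => v (t - r)).prod := by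
    conv_lhs => rw [heq]
    rw [eval_mul, eval_C, Valuation.map_mul]
    congr 1
    rw [eval_multiset_prod, map_multiset_prod v, Multiset.map_map, Multiset.map_map]
    congr 1
    apply Multiset.map_congr rfl
    intro r _
    simp
  have hprodle : (F.roots.map fun r => max (v r) (v t)).prod ≤
      (F.roots.map fun r => v (t - r)).prod := by
    apply Multiset.prod_map_le_prod_map
    exact hmax
  -- M ≤ v (F.eval t)
  have hMle : M ≤ v (F.eval t) := by
    rw [hM]
    apply Finset.sup'_le
    intro i _
    have hci : F.coeff i = F.leadingCoeff * P.coeff i := by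
      conv_lhs => rw [heq]
      rw [coeff_C_mul]
    rw [Valuation.map_mul, hci, Valuation.map_mul, Valuation.map_pow, mul_assoc, hFt]
    refine mul_le_mul' le_rfl ?_
    exact le_trans (le_trans (coeff_prod_bound v t F.roots i) hprodle) le_rfl
  exact absurd (hred t htball) (not_lt.mpr hMle)
end

section
/- Let e ∈ L be nonzero and n ≥ 1 with eⁿ ∈ K, and suppose that for every integer i with 0 < i < n the value v(e)^i does not equal v(x) for any nonzero x ∈ K. Then for all b₀, …, b_{n−1} ∈ K, not all zero, the values v(b_i e^i) taken over the indices i with b_i ≠ 0 are pairwise distinct; consequently v(Σ_{i<n} b_i e^i) = max_{i<n} v(b_i e^i), and there is a unique index k such that b_k ≠ 0 and v((Σ_{i<n} b_i e^i) − b_k e^k) < v(b_k e^k) (i.e. rv(Σ b_i e^i) = rv(b_k)·rv(e)^k, so the leading term of any such sum is the leading term of a single monomial). -/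
/-- If `e ≠ 0`, `eⁿ ∈ K`, and no power `v(e)^i` (`0 < i < n`) is the value of a
nonzero element of `K`, then for `b₀, …, b_{n-1} ∈ K` not all zero, the values
`v (b_i e^i)` (over indices with `b_i ≠ 0`) are pairwise distinct; consequently
the value of the sum is the maximum of the values, and the sum lies in the
rv-ball of a unique monomial `b_k e^k`. -/
theorem e_transcendental_monomial_values
    {L : Type*} [Field L] {Γ₀ : Type*} [LinearOrderedCommGroupWithZero Γ₀]
    (v : Valuation L Γ₀) (K : Subfield L)
    (e : L) (he : e ≠ 0) {n : ℕ} (hn : 1 ≤ n) (hen : e ^ n ∈ K)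
    (hval : ∀ i : ℕ, 0 < i → i < n → ∀ x ∈ K, x ≠ 0 → v e ^ i ≠ v x)
    (b : Fin n → L) (hb : ∀ i, b i ∈ K) (hne : ∃ i, b i ≠ 0) :
    (∀ i j : Fin n, i ≠ j → b i ≠ 0 → b j ≠ 0 →
      v (b i * e ^ (i : ℕ)) ≠ v (b j * e ^ (j : ℕ))) ∧
    v (∑ i, b i * e ^ (i : ℕ)) =
      Finset.univ.sup' ⟨⟨0, hn⟩, Finset.mem_univ _⟩
        (fun i : Fin n => v (b i * e ^ (i : ℕ))) ∧
    ∃! k : Fin n, b k ≠ 0 ∧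
      v ((∑ i, b i * e ^ (i : ℕ)) - b k * e ^ (k : ℕ)) < v (b k * e ^ (k : ℕ)) := by
  -- Step 1: pairwise distinct values
  have key : ∀ i j : Fin n, (i : ℕ) < (j : ℕ) → b i ≠ 0 → b j ≠ 0 →
      v (b i * e ^ (i : ℕ)) ≠ v (b j * e ^ (j : ℕ)) := by
    intro i j hij hbi hbj heq
    have hx : b i * (b j)⁻¹ ∈ K := K.mul_mem (hb i) (K.inv_mem (hb j))
    have hxne : b i * (b j)⁻¹ ≠ 0 := mul_ne_zero hbi (inv_ne_zero hbj)
    apply hval ((j : ℕ) - (i : ℕ)) (by omega) (by omega) _ hx hxne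
    have hpow : e ^ (i : ℕ) * e ^ ((j : ℕ) - (i : ℕ)) = e ^ (j : ℕ) := by
      rw [← pow_add]; congr 1; omega
    have hid : (b i * (b j)⁻¹) * (b j * e ^ (j : ℕ)) =
        (b i * e ^ (i : ℕ)) * e ^ ((j : ℕ) - (i : ℕ)) := by
      rw [mul_assoc (b i) (e ^ (i : ℕ)), hpow]
      field_simp
    have hv : v (b i * (b j)⁻¹) * v (b j * e ^ (j : ℕ)) =
        v (b i * e ^ (i : ℕ)) * v e ^ ((j : ℕ) - (i : ℕ)) := by
      rw [← v.map_pow, ← v.map_mul, ← v.map_mul, hid]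
    have hne0 : v (b j * e ^ (j : ℕ)) ≠ 0 := by
      simp [v.ne_zero_iff, hbj, he]
    rw [heq, mul_comm (v (b i * (b j)⁻¹)) _] at hv
    exact (mul_left_cancel₀ hne0 hv).symm
  have hdist : ∀ i j : Fin n, i ≠ j → b i ≠ 0 → b j ≠ 0 →
      v (b i * e ^ (i : ℕ)) ≠ v (b j * e ^ (j : ℕ)) := by
    intro i j hij hbi hbj
    rcases lt_or_gt_of_ne (fun h : (i : ℕ) = (j : ℕ) => hij (Fin.ext h)) with h | h
    · exact key i j h hbi hbj
    · exact (key j i h hbj hbi).symm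
  -- Step 2: the maximizing index
  obtain ⟨k, -, hk⟩ := Finset.exists_mem_eq_sup' (⟨⟨0, hn⟩, Finset.mem_univ _⟩ :
    (Finset.univ : Finset (Fin n)).Nonempty) (fun i : Fin n => v (b i * e ^ (i : ℕ)))
  obtain ⟨i0, hi0⟩ := hne
  have hkne : b k ≠ 0 := by
    intro h0
    have h1 : v (b i0 * e ^ (i0 : ℕ)) ≤ v (b k * e ^ (k : ℕ)) := by
      rw [← hk]; exact Finset.le_sup' (fun i : Fin n => v (b i * e ^ (i : ℕ))) (Finset.mem_univ i0)
    rw [h0, zero_mul, v.map_zero, le_zero_iff, v.zero_iff] at h1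
    exact mul_ne_zero hi0 (pow_ne_zero _ he) h1
  have hk0 : v (b k * e ^ (k : ℕ)) ≠ 0 := by
    simp [v.ne_zero_iff, hkne, he]
  have hmax : ∀ i : Fin n, i ≠ k → v (b i * e ^ (i : ℕ)) < v (b k * e ^ (k : ℕ)) := by
    intro i hik
    by_cases hbi : b i = 0
    · rw [hbi, zero_mul, v.map_zero]
      exact zero_lt_iff.mpr hk0
    · refine lt_of_le_of_ne ?_ (hdist i k hik hbi hkne)
      rw [← hk]; exact Finset.le_sup' (fun i : Fin n => v (b i * e ^ (i : ℕ))) (Finset.mem_univ i)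
  have hrest : v (∑ i ∈ Finset.univ.erase k, b i * e ^ (i : ℕ)) < v (b k * e ^ (k : ℕ)) :=
    v.map_sum_lt hk0 fun i hi => hmax i (Finset.ne_of_mem_erase hi)
  have hsplit : (∑ i, b i * e ^ (i : ℕ)) =
      (∑ i ∈ Finset.univ.erase k, b i * e ^ (i : ℕ)) + b k * e ^ (k : ℕ) :=
    (Finset.sum_erase_add _ _ (Finset.mem_univ k)).symm
  have hsumval : v (∑ i, b i * e ^ (i : ℕ)) = v (b k * e ^ (k : ℕ)) := by
    rw [hsplit]; exact v.map_add_eq_of_lt_right hrest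
  have hsub : (∑ i, b i * e ^ (i : ℕ)) - b k * e ^ (k : ℕ) =
      ∑ i ∈ Finset.univ.erase k, b i * e ^ (i : ℕ) := by
    rw [hsplit]; ring
  refine ⟨hdist, by rw [hsumval, hk], ⟨k, ⟨hkne, by rw [hsub]; exact hrest⟩, ?_⟩⟩
  rintro k' ⟨hk'ne, hk'lt⟩
  by_contra hkk
  have hvk' : v (∑ i, b i * e ^ (i : ℕ)) = v (b k' * e ^ (k' : ℕ)) := by
    have : (∑ i, b i * e ^ (i : ℕ)) =
        ((∑ i, b i * e ^ (i : ℕ)) - b k' * e ^ (k' : ℕ)) + b k' * e ^ (k' : ℕ) := by ring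
    rw [this]
    exact v.map_add_eq_of_lt_right hk'lt
  exact hdist k' k hkk hk'ne hkne (hvk'.symm.trans hsumval)
end

section
/- Let f ∈ K[X] be a nonzero polynomial, let c ∈ K and ρ ∈ Γ₀ with ρ ≤ v(c), and let B = {x ∈ K : v(x − c) < ρ} (an open ball contained in an rv-ball). Suppose f has no root in B. Then the image f(B) is contained in a single rv-ball: for all a, b ∈ B one has v(f(a) − f(b)) < v(f(b)), i.e. rv(f(a)) = rv(f(b)), so rv ∘ f is constant on B. -/
open Polynomial

/-- rv equality is multiplicative. -/
lemma rv_mul {K Γ₀ : Type*} [Field K] [LinearOrderedCommGroupWithZero Γ₀]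
    (v : Valuation K Γ₀) {x₁ y₁ x₂ y₂ : K}
    (h1 : v (x₁ - y₁) < v y₁) (h2 : v (x₂ - y₂) < v y₂) :
    v (x₁ * x₂ - y₁ * y₂) < v (y₁ * y₂) := by
  have hx1 : v x₁ = v y₁ := by
    have := Valuation.map_add_eq_of_lt_right v (x := x₁ - y₁) (y := y₁) h1
    simpa using this
  have hy1 : v y₁ ≠ 0 := (zero_le'.trans_lt h1).ne'
  have hy2 : v y₂ ≠ 0 := (zero_le'.trans_lt h2).ne'
  have key : x₁ * x₂ - y₁ * y₂ = x₁ * (x₂ - y₂) + (x₁ - y₁) * y₂ := by ring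
  rw [key, map_mul]
  calc v (x₁ * (x₂ - y₂) + (x₁ - y₁) * y₂)
      ≤ max (v (x₁ * (x₂ - y₂))) (v ((x₁ - y₁) * y₂)) := v.map_add _ _
    _ < v y₁ * v y₂ := by
        rw [max_lt_iff, map_mul, map_mul, hx1]
        constructor
        · exact mul_lt_mul_of_le_of_lt_of_nonneg_of_pos le_rfl h2 zero_le' (zero_lt_iff.2 hy1)
        · rw [mul_comm (v (x₁ - y₁)), mul_comm (v y₁)]
          exact mul_lt_mul_of_le_of_lt_of_nonneg_of_pos le_rfl h1 zero_le' (zero_lt_iff.2 hy2)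

/-- If a nonzero polynomial `f` has no root in an open ball
`B = {x : v (x - c) < ρ}` that is contained in an rv-ball (`ρ ≤ v c`), then the
image `f(B)` is contained in a single rv-ball: `rv ∘ f` is constant on `B`. -/
theorem rv_constant_on_rootfree_ball
    {K : Type*} [Field K] [IsAlgClosed K]
    {Γ₀ : Type*} [LinearOrderedCommGroupWithZero Γ₀]
    (v : Valuation K Γ₀)
    (f : Polynomial K) (hf : f ≠ 0) (c : K) (ρ : Γ₀) (hρ : ρ ≤ v c)
    (hroot : ∀ x : K, v (x - c) < ρ → Polynomial.eval x f ≠ 0) :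
    ∀ a b : K, v (a - c) < ρ → v (b - c) < ρ →
      v (Polynomial.eval a f - Polynomial.eval b f) < v (Polynomial.eval b f) := by
  intro a b ha hb
  have hfac := Splits.eq_prod_roots (IsAlgClosed.splits f)
  have hab : v (a - b) < ρ := by
    have h : a - b = (a - c) - (b - c) := by ring
    rw [h]; exact lt_of_le_of_lt (v.map_sub _ _) (max_lt ha hb)
  have hprod : ∀ s : Multiset K, (∀ r ∈ s, ρ ≤ v (r - c)) →
      v ((s.map fun r => a - r).prod - (s.map fun r => b - r).prod)
        < v ((s.map fun r => b - r).prod) := by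
    intro s
    induction s using Multiset.induction_on with
    | empty => intro _; simp
    | cons r t ih =>
      intro h
      have hr : ρ ≤ v (r - c) := h r (Multiset.mem_cons_self ..)
      have hbr : v (b - r) = v (r - c) := by
        have he : b - r = (b - c) - (r - c) := by ring
        rw [he, Valuation.map_sub_eq_of_lt_right v (lt_of_lt_of_le hb hr)]
      have h1 : v ((a - r) - (b - r)) < v (b - r) := by
        have he : (a - r) - (b - r) = a - b := by ring
        rw [he, hbr]; exact lt_of_lt_of_le hab hr
      simpa using rv_mul v h1 (ih fun x hx => h x (Multiset.mem_cons_of_mem hx))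
  have hroots : ∀ r ∈ f.roots, ρ ≤ v (r - c) := by
    intro r hr
    by_contra h
    exact hroot r (lt_of_not_ge h) ((Polynomial.mem_roots hf).1 hr)
  have hp := hprod f.roots hroots
  have hlc : v (f.leadingCoeff - f.leadingCoeff) < v f.leadingCoeff := by
    simp [zero_lt_iff, Polynomial.leadingCoeff_ne_zero.mpr hf]
  have key := rv_mul v hlc hp
  have heval : ∀ x : K, Polynomial.eval x f
      = f.leadingCoeff * (f.roots.map fun r => x - r).prod := by
    intro x
    conv_lhs => rw [hfac]
    simp [Polynomial.eval_multiset_prod, Multiset.map_map, Function.comp]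
  rw [heval a, heval b]
  exact key
end

section
/- Suppose f : A → B is a bijection that is trapezoidal in X with paradigms t₁, t₂. Then for all a, a′ ∈ A: v(a − a′) < v(t₁) if and only if v(f(a) − f(a′)) < v(t₂); moreover, for every a ∈ A, f maps {x ∈ A : v(x − a) < v(t₁)} onto the full open ball {y ∈ K : v(y − f(a)) < v(t₂)}. (In the paper's terms: f carries the maximal open subball around a of the minimal closed ball containing f⁻¹(X_a) bijectively onto the maximal open subball around f(a) of the minimal closed ball containing X_a.) -/
/-- Basic properties of a trapezoidal bijection `f` in `X` with paradigms
`t₁, t₂`: for `a, a'` in the first projection `A` of `X`,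
`v (a - a') < v t₁ ↔ v (f a - f a') < v t₂`, and `f` maps
`{x ∈ A : v (x - a) < v t₁}` onto the full open ball
`{y : v (y - f a) < v t₂}`. -/
theorem trapezoidal_open_ball_correspondence
    {K : Type*} [Field K] {Γ₀ : Type*} [LinearOrderedCommGroupWithZero Γ₀]
    (v : Valuation K Γ₀)
    (X : Set (K × K)) (f : K → K) (t₁ t₂ : K)
    (ht₁ : v t₁ ≠ 0) (ht₂ : v t₂ ≠ 0)
    (hbij : Set.BijOn f (Prod.fst '' X) (Prod.snd '' X))
    (hfiber : ∀ a ∈ Prod.fst '' X, ∀ y : K,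
      (a, y) ∈ X ↔ v (y - f a - t₂) < v t₂)
    (hcofiber : ∀ a ∈ Prod.fst '' X, ∀ a' : K,
      (a' ∈ Prod.fst '' X ∧ (a, f a') ∈ X) ↔ v ((a - a') - t₁) < v t₁) :
    (∀ a ∈ Prod.fst '' X, ∀ a' ∈ Prod.fst '' X,
      (v (a - a') < v t₁ ↔ v (f a - f a') < v t₂)) ∧
    (∀ a ∈ Prod.fst '' X,
      f '' {x : K | x ∈ Prod.fst '' X ∧ v (x - a) < v t₁} =
        {y : K | v (y - f a) < v t₂}) := by
  have hpos₁ : (0 : Γ₀) < v t₁ := zero_lt_iff.mpr ht₁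
  have key : ∀ a ∈ Prod.fst '' X, ∀ a' ∈ Prod.fst '' X,
      (v (a - a') < v t₁ ↔ v (f a - f a') < v t₂) := by
    intro a ha a'' ha''
    -- the auxiliary point `a - t₁` is in `A` and `f (a - t₁) ∈ X_a`
    have h1 : (a - t₁) ∈ Prod.fst '' X ∧ (a, f (a - t₁)) ∈ X := by
      rw [hcofiber a ha]
      have : a - (a - t₁) - t₁ = 0 := by ring
      rw [this, v.map_zero]
      exact hpos₁
    have h2 : v (f (a - t₁) - f a - t₂) < v t₂ := (hfiber a ha _).mp h1.2
    constructor
    · intro hlt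
      have h3 : (a - t₁) ∈ Prod.fst '' X ∧ (a'', f (a - t₁)) ∈ X := by
        rw [hcofiber a'' ha'']
        have : a'' - (a - t₁) - t₁ = -(a - a'') := by ring
        rw [this, v.map_neg]
        exact hlt
      have h4 : v (f (a - t₁) - f a'' - t₂) < v t₂ := (hfiber a'' ha'' _).mp h3.2
      have heq : f a - f a'' =
          (f (a - t₁) - f a'' - t₂) - (f (a - t₁) - f a - t₂) := by ring
      rw [heq]
      exact lt_of_le_of_lt (v.map_sub _ _) (max_lt h4 h2)
    · intro hlt
      have h3 : v (f (a - t₁) - f a'' - t₂) < v t₂ := by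
        have heq : f (a - t₁) - f a'' - t₂ =
            (f (a - t₁) - f a - t₂) + (f a - f a'') := by ring
        rw [heq]
        exact lt_of_le_of_lt (v.map_add _ _) (max_lt h2 hlt)
      have h4 := (hcofiber a'' ha'' (a - t₁)).mp
        ⟨h1.1, (hfiber a'' ha'' _).mpr h3⟩
      have heq : a'' - (a - t₁) - t₁ = -(a - a'') := by ring
      rw [heq, v.map_neg] at h4
      exact h4
  refine ⟨key, ?_⟩
  intro a ha
  ext y
  simp only [Set.mem_image, Set.mem_setOf_eq]
  constructor
  · rintro ⟨x, ⟨hx, hlt⟩, rfl⟩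
    have := (key x hx a ha).mp hlt
    rwa [v.map_sub_swap] at this ⊢
  · intro hy
    obtain ⟨p, hpX, hp⟩ : f a ∈ Prod.snd '' X := hbij.mapsTo ha
    have hc : p.1 ∈ Prod.fst '' X := ⟨p, hpX, rfl⟩
    have hpa : (p.1, f a) ∈ X := by
      have : p = (p.1, f a) := by rw [← hp]
      rwa [this] at hpX
    have h5 : v (f a - f p.1 - t₂) < v t₂ := (hfiber p.1 hc _).mp hpa
    have h6 : v (y - f p.1 - t₂) < v t₂ := by
      have heq : y - f p.1 - t₂ = (y - f a) + (f a - f p.1 - t₂) := by ring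
      rw [heq]
      exact lt_of_le_of_lt (v.map_add _ _) (max_lt hy h5)
    have hy' : y ∈ Prod.snd '' X := ⟨(p.1, y), (hfiber p.1 hc y).mpr h6, rfl⟩
    obtain ⟨x, hx, hfx⟩ := hbij.surjOn hy'
    refine ⟨x, ⟨hx, ?_⟩, hfx⟩
    have : v (f x - f a) < v t₂ := by rw [hfx]; exact hy
    have := (key x hx a ha).mpr this
    exact this
end

section
/- Let γ ∈ Γ₀ with γ ≠ 0, let m ≥ 2, and let c₁, …, c_m ∈ K satisfy v(c_i − c_j) = γ for all i ≠ j (so the open balls 𝔥_i = {x : v(x − c_i) < γ} are m pairwise distinct, hence pairwise disjoint, maximal open subballs of a common closed ball of radius γ). Then there exists an integer k with 1 ≤ k ≤ m + 1 such that v((c₁ + k·(c₂ − c₁)) − c_i) = γ for every 1 ≤ i ≤ m; i.e., the maximal open subball {x : v(x − (c₁ + k(c₂ − c₁))) < γ} is contained in the same closed ball and is disjoint from each 𝔥_i. -/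
/-- If `𝔥₁, …, 𝔥_m` (`m ≥ 2`) are pairwise distinct maximal open subballs, with
centers `c₁, …, c_m` satisfying `v (c_i - c_j) = γ ≠ 0` for `i ≠ j`, of a common
closed ball of radius `γ`, then for some `1 ≤ k ≤ m + 1` the maximal open
subball centered at `c₁ + k (c₂ - c₁)` is disjoint from each `𝔥_i`
(equicharacteristic zero). -/
theorem exists_disjoint_maximal_open_subball
    {K : Type*} [Field K] {Γ₀ : Type*} [LinearOrderedCommGroupWithZero Γ₀]
    (v : Valuation K Γ₀)
    (hchar : ∀ n : ℕ, 0 < n → v (n : K) = 1)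
    {m : ℕ} (hm : 2 ≤ m) (γ : Γ₀) (hγ : γ ≠ 0)
    (c : Fin m → K) (hdist : ∀ i j, i ≠ j → v (c i - c j) = γ) :
    ∃ k : ℕ, 1 ≤ k ∧ k ≤ m + 1 ∧
      ∀ i : Fin m,
        v ((c ⟨0, by omega⟩ + (k : K) * (c ⟨1, by omega⟩ - c ⟨0, by omega⟩)) - c i)
          = γ := by
  classical
  set c0 : K := c ⟨0, by omega⟩ with hc0
  set c1 : K := c ⟨1, by omega⟩ with hc1
  have hd : v (c1 - c0) = γ := hdist _ _ (by simp [Fin.ext_iff])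
  set p : ℕ → K := fun k => c0 + (k : K) * (c1 - c0) with hp
  -- valuation of difference of distinct naturals is 1
  have hvnat : ∀ k k' : ℕ, k ≠ k' → v ((k : K) - (k' : K)) = 1 := by
    have key : ∀ k k' : ℕ, k' < k → v ((k : K) - (k' : K)) = 1 := by
      intro k k' h
      have : (k : K) - (k' : K) = ((k - k' : ℕ) : K) := by
        push_cast [Nat.cast_sub h.le]; ring
      rw [this]
      exact hchar _ (by omega)
    intro k k' h
    rcases lt_or_gt_of_ne h with h' | h'
    · rw [show (k : K) - (k' : K) = -((k' : K) - (k : K)) by ring, v.map_neg]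
      exact key _ _ h'
    · exact key _ _ h'
  have hpp : ∀ k k' : ℕ, k ≠ k' → v (p k - p k') = γ := by
    intro k k' h
    have : p k - p k' = ((k : K) - (k' : K)) * (c1 - c0) := by simp [hp]; ring
    rw [this, v.map_mul, hvnat _ _ h, hd, one_mul]
  -- bad sets
  set bad : Fin m → Finset ℕ :=
    fun i => (Finset.Icc 1 (m + 1)).filter (fun k => v (p k - c i) < γ) with hbad
  have hcard : ∀ i, (bad i).card ≤ 1 := by
    intro i
    refine Finset.card_le_one.mpr ?_
    intro a ha b hb
    by_contra hab
    have h1 : v (p a - c i) < γ := (Finset.mem_filter.mp ha).2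
    have h2 : v (p b - c i) < γ := (Finset.mem_filter.mp hb).2
    have : v (p a - p b) < γ := by
      have := v.map_sub (p a - c i) (p b - c i)
      rw [show (p a - c i) - (p b - c i) = p a - p b by ring] at this
      exact lt_of_le_of_lt this (max_lt h1 h2)
    rw [hpp _ _ hab] at this
    exact lt_irrefl _ this
  have hbig : (Finset.univ.biUnion bad).card ≤ m := by
    calc (Finset.univ.biUnion bad).card ≤ ∑ i : Fin m, (bad i).card :=
          Finset.card_biUnion_le
      _ ≤ ∑ _i : Fin m, 1 := Finset.sum_le_sum (fun i _ => hcard i)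
      _ = m := by simp
  have hicc : (Finset.Icc 1 (m + 1)).card = m + 1 := by
    rw [Nat.card_Icc]; omega
  have : ∃ k ∈ Finset.Icc 1 (m + 1), k ∉ Finset.univ.biUnion bad := by
    by_contra hcon
    push_neg at hcon
    have hsub : Finset.Icc 1 (m + 1) ⊆ Finset.univ.biUnion bad := hcon
    have := Finset.card_le_card hsub
    omega
  obtain ⟨k, hk, hknot⟩ := this
  simp only [Finset.mem_Icc] at hk
  refine ⟨k, hk.1, hk.2, ?_⟩
  intro i
  have hge : γ ≤ v (p k - c i) := by
    by_contra hlt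
    push_neg at hlt
    exact hknot (Finset.mem_biUnion.mpr ⟨i, Finset.mem_univ i,
      Finset.mem_filter.mpr ⟨Finset.mem_Icc.mpr hk, hlt⟩⟩)
  have hle : v (p k - c i) ≤ γ := by
    have h2 : v ((k : K) * (c1 - c0)) = γ := by
      rw [v.map_mul, hchar k (by omega), hd, one_mul]
    have h1 : v (c0 - c i) ≤ γ := by
      by_cases hi : (⟨0, by omega⟩ : Fin m) = i
      · rw [hc0, hi, sub_self, v.map_zero]
        exact zero_le'
      · exact le_of_eq (hdist _ _ hi)
    have := v.map_add (c0 - c i) ((k : K) * (c1 - c0))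
    rw [show (c0 - c i) + (k : K) * (c1 - c0) = p k - c i by simp [hp]; ring] at this
    exact le_trans this (max_le h1 (le_of_eq h2))
  exact le_antisymm hle hge
end
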